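/- Let Σ be a σ-algebra and f : Σ → ℝ a bounded countably additive function. Then f attains both a global maximum and a global minimum on Σ. -/

import Mathlib

def CountablyAdditive {Ω : Type*} [MeasurableSpace Ω] (f : Set Ω → ℝ) : Prop :=
  ∀ X : ℕ → Set Ω, (∀ n, MeasurableSet (X n)) → Pairwise (Function.onFun Disjoint X) →
    HasSum (fun n => f (X n)) (f (⋃ n, X n))

theorem stmt3 {Ω : Type*} [MeasurableSpace Ω] (f : Set Ω → ℝ)
    (hf : CountablyAdditive f)
    (hbd : ∃ C : ℝ, ∀ X : Set Ω, MeasurableSet X → |f X| ≤ C) :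
    (∃ X : Set Ω, MeasurableSet X ∧ ∀ Y : Set Ω, MeasurableSet Y → f Y ≤ f X) ∧
      (∃ X : Set Ω, MeasurableSet X ∧ ∀ Y : Set Ω, MeasurableSet Y → f X ≤ f Y) := by
  classical
  clear hbd
  have hempty : f ∅ = 0 := by
    have h := hf (fun _ => ∅) (fun _ => MeasurableSet.empty)
      (fun i j _ => disjoint_bot_left)
    simp only [Set.iUnion_empty] at h
    have h0 := h.summable.tendsto_atTop_zero
    exact tendsto_nhds_unique tendsto_const_nhds h0
  set s : MeasureTheory.SignedMeasure Ω :=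
    { measureOf' := fun X => if MeasurableSet X then f X else 0
      empty' := by simp [hempty]
      not_measurable' := fun X hX => if_neg hX
      m_iUnion' := by
        intro X hX hd
        simpa only [if_pos (hX _), if_pos (MeasurableSet.iUnion hX)] using hf X hX hd } with hs
  have hsf : ∀ X : Set Ω, MeasurableSet X → s X = f X := fun X hX =>
    show (if MeasurableSet X then f X else 0) = f X from if_pos hX
  obtain ⟨i, hi, hpos, hneg⟩ := s.exists_compl_positive_negative
  have key : ∀ Y : Set Ω, MeasurableSet Y → s Y ≤ s i ∧ s iᶜ ≤ s Y := by
    intro Y hY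
    have e1 : (Y ∩ i) ∪ (Y ∩ iᶜ) = Y := by
      rw [← Set.inter_union_distrib_left, Set.union_compl_self, Set.inter_univ]
    have e2 : (Y ∩ i) ∪ (i \ Y) = i := by
      rw [Set.inter_comm]; exact Set.inter_union_diff i Y
    have e3 : (Y ∩ iᶜ) ∪ (iᶜ \ Y) = iᶜ := by
      rw [Set.inter_comm]; exact Set.inter_union_diff iᶜ Y
    have h1 : s Y = s (Y ∩ i) + s (Y ∩ iᶜ) := by
      rw [← s.of_union (Set.disjoint_of_subset Set.inter_subset_right Set.inter_subset_right
        disjoint_compl_right) (hY.inter hi) (hY.inter hi.compl), e1]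
    have h2 : s i = s (Y ∩ i) + s (i \ Y) := by
      rw [← s.of_union (Set.disjoint_of_subset Set.inter_subset_left (subset_refl _)
        disjoint_sdiff_self_right) (hY.inter hi) (hi.diff hY), e2]
    have h3 : s iᶜ = s (Y ∩ iᶜ) + s (iᶜ \ Y) := by
      rw [← s.of_union (Set.disjoint_of_subset Set.inter_subset_left (subset_refl _)
        disjoint_sdiff_self_right) (hY.inter hi.compl) (hi.compl.diff hY), e3]
    have pYi : (0 : ℝ) ≤ s (Y ∩ i) := by
      simpa using MeasureTheory.VectorMeasure.subset_le_of_restrict_le_restrict 0 s hi hpos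
        (Set.inter_subset_right (s := Y))
    have pdiff : (0 : ℝ) ≤ s (i \ Y) := by
      simpa using MeasureTheory.VectorMeasure.subset_le_of_restrict_le_restrict 0 s hi hpos
        (Set.diff_subset (s := i) (t := Y))
    have nYc : s (Y ∩ iᶜ) ≤ 0 := by
      simpa using MeasureTheory.VectorMeasure.subset_le_of_restrict_le_restrict s 0 hi.compl hneg
        (Set.inter_subset_right (s := Y))
    have ndiff : s (iᶜ \ Y) ≤ 0 := by
      simpa using MeasureTheory.VectorMeasure.subset_le_of_restrict_le_restrict s 0 hi.compl hneg
        (Set.diff_subset (s := iᶜ) (t := Y))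
    constructor
    · rw [h1, h2]; linarith
    · rw [h1, h3]; linarith
  constructor
  · exact ⟨i, hi, fun Y hY => by
      rw [← hsf Y hY, ← hsf i hi]; exact (key Y hY).1⟩
  · exact ⟨iᶜ, hi.compl, fun Y hY => by
      rw [← hsf Y hY, ← hsf iᶜ hi.compl]; exact (key Y hY).2⟩
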